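/- Let P : ℂ → ℂ be a monic polynomial of degree D ≥ 2, with filled Julia set K_P and Green's function G. For every s > 0, the set of singularities of G at potential greater than s, namely {z ∈ ℂ ∖ K_P : the real Fréchet derivative of G vanishes at z and G(z) > s}, is finite. -/

import Mathlib

open Filter Topology Polynomial

namespace Sing

noncomputable section

def Piter (P : Polynomial ℂ) : ℕ → Polynomial ℂ
  | 0 => Polynomial.X
  | n + 1 => (Piter P n).comp P

def Q (P : Polynomial ℂ) (n : ℕ) (z : ℂ) : ℂ := (Piter P n).eval z

def dQ (P : Polynomial ℂ) (n : ℕ) (z : ℂ) : ℂ := (Piter P n).derivative.eval z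

def phi (P : Polynomial ℂ) (D : ℕ) (n : ℕ) (z : ℂ) : ℂ :=
  dQ P n z / ((D : ℂ) ^ n * Q P n z)

def psi (P : Polynomial ℂ) (D : ℕ) (z : ℂ) : ℂ :=
  limUnder atTop (fun n => phi P D n z)

def E (a : ℂ) : ℂ →L[ℝ] ℝ :=
  Complex.reCLM.comp (((ContinuousLinearMap.mul ℂ ℂ) a).restrictScalars ℝ)

def AA (P : Polynomial ℂ) (D : ℕ) : ℝ :=
  ∑ i ∈ Finset.range D, ‖(P - Polynomial.X ^ D).coeff i‖

def CC (P : Polynomial ℂ) (D : ℕ) : ℝ :=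
  (∑ i ∈ Finset.range D, ‖(Polynomial.X * P.derivative - Polynomial.C (D : ℂ) * P).coeff i‖) + 1

def RR (P : Polynomial ℂ) (D : ℕ) : ℝ := 2 * AA P D + 8 * CC P D + 8

lemma Q_zero (P : Polynomial ℂ) (z : ℂ) : Q P 0 z = z := by simp [Q, Piter]

lemma Q_succ (P : Polynomial ℂ) (n : ℕ) (z : ℂ) : Q P (n+1) z = Q P n (P.eval z) := by
  simp [Q, Piter, Polynomial.eval_comp]

lemma Q_iterate (P : Polynomial ℂ) (n : ℕ) (z : ℂ) :
    Q P n z = (fun w => P.eval w)^[n] z := by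
  induction n generalizing z with
  | zero => simp [Q_zero]
  | succ n ih => rw [Q_succ, ih, Function.iterate_succ_apply]

lemma Q_succ' (P : Polynomial ℂ) (n : ℕ) (z : ℂ) : Q P (n+1) z = P.eval (Q P n z) := by
  rw [Q_iterate, Q_iterate, Function.iterate_succ_apply']

lemma Q_add (P : Polynomial ℂ) (a b : ℕ) (z : ℂ) : Q P a (Q P b z) = Q P (a + b) z := by
  rw [Q_iterate, Q_iterate, Q_iterate, ← Function.iterate_add_apply]

lemma dQ_zero (P : Polynomial ℂ) (z : ℂ) : dQ P 0 z = 1 := by simp [dQ, Piter]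

lemma dQ_succ (P : Polynomial ℂ) (n : ℕ) (z : ℂ) :
    dQ P (n+1) z = P.derivative.eval z * dQ P n (P.eval z) := by
  simp [dQ, Piter, Polynomial.derivative_comp, Polynomial.eval_comp]

lemma dQ_succ' (P : Polynomial ℂ) (n : ℕ) (z : ℂ) :
    dQ P (n+1) z = dQ P n z * P.derivative.eval (Q P n z) := by
  induction n generalizing z with
  | zero => simp [dQ_succ, dQ_zero, Q_zero, mul_comm]
  | succ n ih =>
      rw [dQ_succ, ih (P.eval z), dQ_succ, Q_succ, mul_assoc]

lemma E_apply (a v : ℂ) : E a v = (a * v).re := rfl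

lemma E_sub (a b : ℂ) : E a - E b = E (a - b) := by
  ext v
  simp [E_apply, sub_mul]

lemma E_norm_le (a : ℂ) : ‖E a‖ ≤ ‖a‖ := by
  refine ContinuousLinearMap.opNorm_le_bound _ (norm_nonneg a) fun v => ?_
  rw [E_apply]
  calc |(a * v).re| ≤ ‖a * v‖ := Complex.abs_re_le_norm _
    _ = ‖a‖ * ‖v‖ := by rw [norm_mul]

lemma E_smul (r : ℝ) (a : ℂ) : E ((r : ℂ) * a) = r • E a := by
  ext v
  simp [E_apply, mul_assoc, Complex.mul_re, Complex.ofReal_re, Complex.ofReal_im]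

lemma E_inj {a : ℂ} (h : E a = 0) : a = 0 := by
  have h1 : (a * 1).re = 0 := by rw [← E_apply, h]; rfl
  have h2 : (a * Complex.I).re = 0 := by rw [← E_apply, h]; rfl
  simp [Complex.mul_re, Complex.I_re, Complex.I_im] at h1 h2
  exact Complex.ext h1 h2

lemma eval_bound {q : Polynomial ℂ} {n : ℕ} (hq : q.natDegree < n) {w : ℂ} (hw : 1 ≤ ‖w‖) :
    ‖q.eval w‖ ≤ (∑ i ∈ Finset.range n, ‖q.coeff i‖) * ‖w‖ ^ (n - 1) := by
  rw [Polynomial.eval_eq_sum_range' hq]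
  refine (norm_sum_le _ _).trans ?_
  rw [Finset.sum_mul]
  refine Finset.sum_le_sum fun i hi => ?_
  rw [norm_mul, norm_pow]
  refine mul_le_mul_of_nonneg_left ?_ (norm_nonneg _)
  exact pow_le_pow_right₀ hw (by simp at hi; omega)

section Bounds

variable {D : ℕ} {P : Polynomial ℂ}

lemma AA_nonneg : 0 ≤ AA P D := Finset.sum_nonneg fun _ _ => norm_nonneg _

lemma CC_ge_one : 1 ≤ CC P D :=
  le_add_of_nonneg_left (Finset.sum_nonneg fun _ _ => norm_nonneg _)

lemma RR_ge : 2 * AA P D + 8 * CC P D + 8 ≤ RR P D := le_refl _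

lemma RR_big : 8 ≤ RR P D := by
  have h1 := AA_nonneg (P := P) (D := D)
  have h2 := CC_ge_one (P := P) (D := D)
  unfold RR; linarith

lemma sub_pow_natDegree_lt (hD : 2 ≤ D) (hmonic : P.Monic) (hdeg : P.natDegree = D) :
    (P - Polynomial.X ^ D).natDegree < D := by
  have h : (P - Polynomial.X ^ D).natDegree ≤ D - 1 := by
    rw [Polynomial.natDegree_le_iff_coeff_eq_zero]
    intro N hN
    have hN' : D ≤ N := by omega
    rw [Polynomial.coeff_sub, Polynomial.coeff_X_pow]
    rcases eq_or_lt_of_le hN' with h | h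
    · rw [← h, if_pos rfl, ← hdeg, hmonic.coeff_natDegree]; ring
    · rw [if_neg (by omega), Polynomial.coeff_eq_zero_of_natDegree_lt (by omega : P.natDegree < N)]
      ring
  omega

lemma num_natDegree_lt (hD : 2 ≤ D) (hmonic : P.Monic) (hdeg : P.natDegree = D) :
    (Polynomial.X * P.derivative - Polynomial.C (D : ℂ) * P).natDegree < D := by
  have h : (Polynomial.X * P.derivative - Polynomial.C (D : ℂ) * P).natDegree ≤ D - 1 := by
    rw [Polynomial.natDegree_le_iff_coeff_eq_zero]
    intro N hN
    have hN' : D ≤ N := by omega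
    obtain ⟨k, rfl⟩ : ∃ k, N = k + 1 := ⟨N - 1, by omega⟩
    rw [Polynomial.coeff_sub, Polynomial.coeff_X_mul, Polynomial.coeff_derivative,
      Polynomial.coeff_C_mul]
    rcases eq_or_lt_of_le hN' with h | h
    · have h1 : P.coeff (k + 1) = 1 := by
        rw [show k + 1 = P.natDegree by omega]; exact hmonic.coeff_natDegree
      rw [h1]
      have : ((k : ℂ) + 1) = (D : ℂ) := by
        have : (D : ℂ) = ((k + 1 : ℕ) : ℂ) := by rw [← h]
        rw [this]; push_cast; ring
      rw [this]; ring
    · rw [Polynomial.coeff_eq_zero_of_natDegree_lt (by omega : P.natDegree < k + 1)]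
      ring
  omega

lemma grow (hD : 2 ≤ D) (hmonic : P.Monic) (hdeg : P.natDegree = D) {w : ℂ}
    (hw : RR P D ≤ ‖w‖) :
    2 * ‖w‖ ≤ ‖P.eval w‖ ∧ ‖w‖ ^ D ≤ 2 * ‖P.eval w‖ := by
  have hA := AA_nonneg (P := P) (D := D)
  have hC := CC_ge_one (P := P) (D := D)
  have hw8 : 8 ≤ ‖w‖ := le_trans RR_big hw
  have hw1 : 1 ≤ ‖w‖ := by linarith
  have hAw : 2 * AA P D ≤ ‖w‖ := by
    refine le_trans ?_ hw; unfold RR; linarith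
  have hkey : ‖P.eval w - w ^ D‖ ≤ AA P D * ‖w‖ ^ (D - 1) := by
    have h := eval_bound (sub_pow_natDegree_lt hD hmonic hdeg) hw1
    simpa [AA] using h
  have h2 : ‖w‖ ^ D = ‖w‖ ^ (D - 1) * ‖w‖ := by
    rw [← pow_succ]; congr 1; omega
  have hpow : ‖w‖ ≤ ‖w‖ ^ (D - 1) := by
    calc ‖w‖ = ‖w‖ ^ 1 := (pow_one _).symm
      _ ≤ ‖w‖ ^ (D - 1) := pow_le_pow_right₀ hw1 (by omega)
  have hlow : ‖w‖ ^ (D - 1) * (‖w‖ / 2) ≤ ‖P.eval w‖ := by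
    have h3 : ‖w ^ D‖ - ‖P.eval w - w ^ D‖ ≤ ‖P.eval w‖ := by
      have := norm_sub_norm_le (w ^ D) (w ^ D - P.eval w)
      simp only [sub_sub_cancel] at this
      rw [norm_sub_rev (w ^ D)] at this
      exact this
    rw [norm_pow] at h3
    have hp : (0:ℝ) ≤ ‖w‖ ^ (D - 1) := by positivity
    nlinarith
  constructor
  · nlinarith
  · nlinarith

lemma RR_pos : (0:ℝ) < RR P D := lt_of_lt_of_le (by norm_num) RR_big

lemma Qgrow (hD : 2 ≤ D) (hmonic : P.Monic) (hdeg : P.natDegree = D) {w : ℂ} {N : ℕ}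
    (h : RR P D ≤ ‖Q P N w‖) : ∀ m, RR P D * 2 ^ m ≤ ‖Q P (N + m) w‖ := by
  intro m
  induction m with
  | zero => simpa using h
  | succ m ih =>
      have h1 : RR P D ≤ ‖Q P (N + m) w‖ := by
        have : (1:ℝ) ≤ 2 ^ m := one_le_pow₀ (by norm_num)
        nlinarith [RR_pos (P := P) (D := D)]
      have h2 := (grow hD hmonic hdeg h1).1
      rw [show N + (m + 1) = (N + m) + 1 by omega, Q_succ']
      calc RR P D * 2 ^ (m + 1) = 2 * (RR P D * 2 ^ m) := by ring
        _ ≤ 2 * ‖Q P (N + m) w‖ := by linarith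
        _ ≤ ‖P.eval (Q P (N + m) w)‖ := h2

end Bounds

section Step

variable {D : ℕ} {P : Polynomial ℂ}

lemma ratio_bound (hD : 2 ≤ D) (hmonic : P.Monic) (hdeg : P.natDegree = D) {w : ℂ}
    (hw : RR P D ≤ ‖w‖) :
    ‖P.derivative.eval w * w - (D : ℂ) * P.eval w‖ ≤ CC P D * ‖w‖ ^ (D - 1) := by
  have hw1 : 1 ≤ ‖w‖ := by have := RR_big (P := P) (D := D); linarith
  have h := eval_bound (num_natDegree_lt hD hmonic hdeg) hw1
  have he : (Polynomial.X * P.derivative - Polynomial.C (D : ℂ) * P).eval w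
      = P.derivative.eval w * w - (D : ℂ) * P.eval w := by
    simp [mul_comm]
  rw [he] at h
  refine h.trans ?_
  have hp : (0:ℝ) ≤ ‖w‖ ^ (D - 1) := by positivity
  have : (∑ i ∈ Finset.range D,
      ‖(Polynomial.X * P.derivative - Polynomial.C (D : ℂ) * P).coeff i‖) ≤ CC P D := by
    unfold CC; linarith
  nlinarith

lemma stepb (hD : 2 ≤ D) (hmonic : P.Monic) (hdeg : P.natDegree = D) {w : ℂ} {n : ℕ}
    (hq : RR P D ≤ ‖Q P n w‖) :
    ‖phi P D (n+1) w - phi P D n w‖ ≤ ‖phi P D n w‖ * (CC P D / ‖Q P n w‖) := by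
  set q := Q P n w with hqdef
  have hq1 : (1:ℝ) ≤ ‖q‖ := by have := RR_big (P := P) (D := D); linarith
  have hq0 : q ≠ 0 := by intro h; rw [h] at hq1; simp at hq1; linarith
  have hgrow := grow hD hmonic hdeg hq
  have hPqn : (0:ℝ) < ‖P.eval q‖ := by nlinarith
  have hPq0 : P.eval q ≠ 0 := by intro h; rw [h] at hPqn; simp at hPqn
  have hDne : (D : ℂ) ≠ 0 := by
    simp only [ne_eq, Nat.cast_eq_zero]; omega
  have hDpne : ((D : ℂ)) ^ n ≠ 0 := pow_ne_zero _ hDne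
  have hid : phi P D (n+1) w - phi P D n w
      = phi P D n w * ((P.derivative.eval q * q - (D : ℂ) * P.eval q) / ((D : ℂ) * P.eval q)) := by
    simp only [phi, dQ_succ', Q_succ', ← hqdef, pow_succ]
    field_simp
  rw [hid, norm_mul]
  refine mul_le_mul_of_nonneg_left ?_ (norm_nonneg _)
  rw [norm_div, norm_mul, Complex.norm_natCast]
  have hnum := ratio_bound hD hmonic hdeg hq
  have hDR : (2:ℝ) ≤ (D:ℝ) := by exact_mod_cast hD
  have hpos : (0:ℝ) < (D:ℝ) * ‖P.eval q‖ := by positivity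
  rw [div_le_div_iff₀ hpos (by linarith : (0:ℝ) < ‖q‖)]
  have h2 : ‖q‖ ^ D = ‖q‖ ^ (D - 1) * ‖q‖ := by
    rw [← pow_succ]; congr 1; omega
  have hC := CC_ge_one (P := P) (D := D)
  have hp : (0:ℝ) ≤ ‖q‖ ^ (D - 1) := by positivity
  have k1 := mul_le_mul_of_nonneg_right hnum (by linarith : (0:ℝ) ≤ ‖q‖)
  have k2 := mul_le_mul_of_nonneg_left hgrow.2 (by linarith : (0:ℝ) ≤ CC P D)
  have k3 : CC P D * (2 * ‖P.eval q‖) ≤ CC P D * ((D:ℝ) * ‖P.eval q‖) :=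
    mul_le_mul_of_nonneg_left (mul_le_mul_of_nonneg_right hDR hPqn.le) (by linarith)
  rw [h2] at k2
  nlinarith

end Step

section Cauchy

variable {D : ℕ} {P : Polynomial ℂ}

lemma CC_div_RR : CC P D / RR P D ≤ 1 / 8 := by
  have hC := CC_ge_one (P := P) (D := D)
  have hA := AA_nonneg (P := P) (D := D)
  have hR : 8 * CC P D ≤ RR P D := by unfold RR; linarith
  rw [div_le_div_iff₀ (RR_pos (P := P) (D := D)) (by norm_num)]
  linarith

lemma sumstep (hD : 2 ≤ D) (hmonic : P.Monic) (hdeg : P.natDegree = D) {w : ℂ} {N : ℕ}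
    (h : RR P D ≤ ‖Q P N w‖) : ∀ m,
    ‖phi P D (N + m) w - phi P D N w‖ ≤ ‖phi P D N w‖ * (1/2) * (1 - (1/2) ^ m) ∧
    ‖phi P D (N + m + 1) w - phi P D (N + m) w‖ ≤ ‖phi P D N w‖ * ((1/4) * (1/2) ^ m) := by
  have hRpos := RR_pos (P := P) (D := D)
  have hC1 := CC_ge_one (P := P) (D := D)
  have hCpos : (0:ℝ) < CC P D := by linarith
  have key : ∀ m, ‖phi P D (N + m + 1) w - phi P D (N + m) w‖
      ≤ ‖phi P D (N + m) w‖ * ((1/8) * (1/2) ^ m) := by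
    intro m
    have hQm : RR P D * 2 ^ m ≤ ‖Q P (N + m) w‖ := Qgrow hD hmonic hdeg h m
    have hQm' : RR P D ≤ ‖Q P (N + m) w‖ := by
      have : (1:ℝ) ≤ 2 ^ m := one_le_pow₀ (by norm_num)
      nlinarith
    refine (stepb hD hmonic hdeg hQm').trans ?_
    refine mul_le_mul_of_nonneg_left ?_ (norm_nonneg _)
    have hq0 : (0:ℝ) < ‖Q P (N + m) w‖ := by linarith
    rw [div_le_iff₀ hq0]
    have h8 : CC P D ≤ RR P D / 8 := by
      have := CC_div_RR (P := P) (D := D)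
      rw [div_le_div_iff₀ hRpos (by norm_num)] at this
      linarith
    have hp2 : (0:ℝ) < (2:ℝ) ^ m := by positivity
    calc CC P D ≤ RR P D / 8 := h8
      _ = (1/8) * (1/2) ^ m * (RR P D * 2 ^ m) := by
          field_simp
          rw [← mul_pow]; norm_num
      _ ≤ (1/8) * (1/2) ^ m * ‖Q P (N + m) w‖ := by
          refine mul_le_mul_of_nonneg_left hQm ?_
          positivity
  intro m
  induction m with
  | zero =>
      constructor
      · simp
      · have := key 0
        simp only [pow_zero, mul_one, Nat.add_zero] at this ⊢
        refine this.trans ?_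
        nlinarith [norm_nonneg (phi P D N w)]
  | succ m ih =>
      obtain ⟨hsum, hstep⟩ := ih
      have hp : (0:ℝ) ≤ (1/2:ℝ) ^ m := by positivity
      have hpow : ((1:ℝ)/2) ^ (m+1) = (1/2) * (1/2) ^ m := by rw [pow_succ]; ring
      have tri : ‖phi P D (N + (m+1)) w - phi P D N w‖
          ≤ ‖phi P D (N + m + 1) w - phi P D (N + m) w‖ + ‖phi P D (N + m) w - phi P D N w‖ := by
        have h1 := dist_triangle (phi P D (N + m + 1) w) (phi P D (N + m) w) (phi P D N w)
        simpa [dist_eq_norm, show N + (m+1) = N + m + 1 from rfl] using h1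
      have hsum1 : ‖phi P D (N + (m+1)) w - phi P D N w‖
          ≤ ‖phi P D N w‖ * (1/2) * (1 - (1/2) ^ (m+1)) := by
        rw [hpow]; nlinarith
      refine ⟨hsum1, ?_⟩
      have hnorm1 : ‖phi P D (N + (m+1)) w‖ ≤ (3/2) * ‖phi P D N w‖ := by
        have h1 := norm_sub_norm_le (phi P D (N + (m+1)) w) (phi P D N w)
        have hp1 : (0:ℝ) ≤ (1/2:ℝ) ^ (m+1) := by positivity
        nlinarith [norm_nonneg (phi P D N w)]
      have h2 := key (m+1)
      refine h2.trans ?_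
      have hp1 : (0:ℝ) ≤ (1/2:ℝ) ^ (m+1) := by positivity
      nlinarith [norm_nonneg (phi P D N w)]

end Cauchy

section Limit

variable {D : ℕ} {P : Polynomial ℂ}

lemma tail (hD : 2 ≤ D) (hmonic : P.Monic) (hdeg : P.natDegree = D) {w : ℂ} {N : ℕ}
    (h : RR P D ≤ ‖Q P N w‖) (m j : ℕ) :
    ‖phi P D (N + m + j) w - phi P D (N + m) w‖ ≤ ‖phi P D N w‖ * (1/2) ^ m := by
  have claim : ∀ j, ‖phi P D (N + m + j) w - phi P D (N + m) w‖
      ≤ ‖phi P D N w‖ * ((1/2) * (1/2) ^ m * (1 - (1/2) ^ j)) := by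
    intro j
    induction j with
    | zero => simp
    | succ j ih =>
        have hstep := (sumstep hD hmonic hdeg h (m + j)).2
        have tri : ‖phi P D (N + m + (j+1)) w - phi P D (N + m) w‖
            ≤ ‖phi P D (N + (m + j) + 1) w - phi P D (N + (m + j)) w‖
              + ‖phi P D (N + m + j) w - phi P D (N + m) w‖ := by
          have h1 := dist_triangle (phi P D (N + m + (j+1)) w) (phi P D (N + m + j) w)
            (phi P D (N + m) w)
          have e1 : N + (m + j) + 1 = N + m + (j + 1) := by omega
          have e2 : N + (m + j) = N + m + j := by omega
          rw [e1, e2]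
          simpa [dist_eq_norm] using h1
        have hpowadd : ((1:ℝ)/2) ^ (m + j) = (1/2) ^ m * (1/2) ^ j := pow_add _ _ _
        have hp1 : (0:ℝ) ≤ (1/2:ℝ) ^ m := by positivity
        have hp2 : (0:ℝ) ≤ (1/2:ℝ) ^ j := by positivity
        have hpow : ((1:ℝ)/2) ^ (j+1) = (1/2) * (1/2) ^ j := by rw [pow_succ]; ring
        rw [hpow]
        nlinarith [norm_nonneg (phi P D N w)]
  refine (claim j).trans (mul_le_mul_of_nonneg_left ?_ (norm_nonneg _))
  have hp1 : (0:ℝ) ≤ (1/2:ℝ) ^ m := by positivity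
  have hp2 : (0:ℝ) ≤ (1/2:ℝ) ^ j := by positivity
  have hp3 : ((1:ℝ)/2) ^ j ≤ 1 := pow_le_one₀ (by norm_num) (by norm_num)
  nlinarith

lemma tendsto_phi (hD : 2 ≤ D) (hmonic : P.Monic) (hdeg : P.natDegree = D) {w : ℂ} {N : ℕ}
    (h : RR P D ≤ ‖Q P N w‖) :
    Tendsto (fun n => phi P D n w) atTop (𝓝 (psi P D w)) := by
  have cau : CauchySeq (fun j => phi P D (N + j) w) := by
    apply cauchySeq_of_le_tendsto_0 (fun j => ‖phi P D N w‖ * (1/2) ^ j * 2)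
    · intro n m NN hn hm
      have t1 : dist (phi P D (N + n) w) (phi P D (N + NN) w)
          ≤ ‖phi P D N w‖ * (1/2) ^ NN := by
        have := tail hD hmonic hdeg h NN (n - NN)
        rw [show N + NN + (n - NN) = N + n by omega] at this
        rwa [dist_eq_norm]
      have t2 : dist (phi P D (N + m) w) (phi P D (N + NN) w)
          ≤ ‖phi P D N w‖ * (1/2) ^ NN := by
        have := tail hD hmonic hdeg h NN (m - NN)
        rw [show N + NN + (m - NN) = N + m by omega] at this
        rwa [dist_eq_norm]
      calc dist (phi P D (N + n) w) (phi P D (N + m) w)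
          ≤ dist (phi P D (N + n) w) (phi P D (N + NN) w)
            + dist (phi P D (N + NN) w) (phi P D (N + m) w) := dist_triangle _ _ _
        _ ≤ ‖phi P D N w‖ * (1/2) ^ NN + ‖phi P D N w‖ * (1/2) ^ NN := by
            rw [dist_comm (phi P D (N + NN) w)]; linarith
        _ = ‖phi P D N w‖ * (1/2) ^ NN * 2 := by ring
    · have h1 : Tendsto (fun j : ℕ => ((1:ℝ)/2) ^ j) atTop (𝓝 0) :=
        tendsto_pow_atTop_nhds_zero_of_lt_one (by norm_num) (by norm_num)
      have h2 := (h1.const_mul ‖phi P D N w‖).mul_const 2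
      simpa using h2
  obtain ⟨L, hL⟩ := cauchySeq_tendsto_of_complete cau
  have hL' : Tendsto (fun n => phi P D n w) atTop (𝓝 L) := by
    rw [← tendsto_add_atTop_iff_nat N]
    simpa [Nat.add_comm] using hL
  have hpsi : psi P D w = L := hL'.limUnder_eq
  rwa [hpsi]

lemma dist_psi (hD : 2 ≤ D) (hmonic : P.Monic) (hdeg : P.natDegree = D) {w : ℂ} {N : ℕ}
    (h : RR P D ≤ ‖Q P N w‖) (m : ℕ) :
    ‖psi P D w - phi P D (N + m) w‖ ≤ ‖phi P D N w‖ * (1/2) ^ m := by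
  have h2 : Tendsto (fun j => phi P D (N + m + j) w) atTop (𝓝 (psi P D w)) := by
    have := (tendsto_phi hD hmonic hdeg h).comp (tendsto_add_atTop_nat (N + m))
    simpa [Function.comp_def, Nat.add_comm] using this
  have h1 : Tendsto (fun j => phi P D (N + m + j) w - phi P D (N + m) w) atTop
      (𝓝 (psi P D w - phi P D (N + m) w)) := h2.sub_const _
  exact le_of_tendsto h1.norm (Filter.Eventually.of_forall fun j => tail hD hmonic hdeg h m j)

lemma psi_lower (hD : 2 ≤ D) (hmonic : P.Monic) (hdeg : P.natDegree = D) {w : ℂ}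
    (hw : RR P D ≤ ‖w‖) : 1 / (2 * ‖w‖) ≤ ‖psi P D w‖ := by
  have hwpos : (0:ℝ) < ‖w‖ := lt_of_lt_of_le (RR_pos (P := P) (D := D)) hw
  have h0 : RR P D ≤ ‖Q P 0 w‖ := by rwa [Q_zero]
  have hphi0 : ‖phi P D 0 w‖ = 1 / ‖w‖ := by
    simp [phi, dQ_zero, Q_zero]
  have hb : ∀ m, 1 / (2 * ‖w‖) ≤ ‖phi P D m w‖ := by
    intro m
    have hs := (sumstep hD hmonic hdeg h0 m).1
    rw [Nat.zero_add] at hs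
    have h1 := norm_sub_norm_le (phi P D 0 w) (phi P D m w)
    rw [norm_sub_rev] at h1
    have hp1 : (0:ℝ) ≤ (1/2:ℝ) ^ m := by positivity
    have hp3 : ((1:ℝ)/2) ^ m ≤ 1 := pow_le_one₀ (by norm_num) (by norm_num)
    have e1 : (1:ℝ) / (2 * ‖w‖) = (1 / ‖w‖) / 2 := by ring
    rw [e1, ← hphi0]
    nlinarith [norm_nonneg (phi P D 0 w), norm_nonneg (phi P D m w)]
  exact ge_of_tendsto (tendsto_phi hD hmonic hdeg h0).norm
    (Filter.Eventually.of_forall hb)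

end Limit

section DLog

lemma hdlog {f : ℂ → ℂ} {f' x : ℂ} (hf : HasDerivAt f f' x) (h0 : f x ≠ 0) :
    HasFDerivAt (fun w => Real.log (‖f w‖)) (E (f' / f x)) x := by
  have hg : HasDerivAt (fun w => Complex.log (f w / f x)) (f' / f x) x := by
    have h1 : HasDerivAt (fun w => f w / f x) (f' / f x) x := hf.div_const _
    have h2 : HasDerivAt Complex.log ((f x / f x)⁻¹) (f x / f x) := by
      apply Complex.hasDerivAt_log
      rw [div_self h0]
      exact Complex.one_mem_slitPlane
    have h3 := h2.comp x h1
    rw [div_self h0] at h3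
    simpa [Function.comp_def] using h3
  have hR : HasFDerivAt (fun w => Complex.log (f w / f x))
      ((ContinuousLinearMap.smulRight (1 : ℂ →L[ℂ] ℂ) (f' / f x)).restrictScalars ℝ) x :=
    hg.hasFDerivAt.restrictScalars ℝ
  have hRe : HasFDerivAt (fun w => (Complex.log (f w / f x)).re)
      (Complex.reCLM.comp
        ((ContinuousLinearMap.smulRight (1 : ℂ →L[ℂ] ℂ) (f' / f x)).restrictScalars ℝ)) x :=
    (Complex.reCLM.hasFDerivAt).comp x hR
  have hE : Complex.reCLM.comp
      ((ContinuousLinearMap.smulRight (1 : ℂ →L[ℂ] ℂ) (f' / f x)).restrictScalars ℝ)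
      = E (f' / f x) := by
    ext v
    simp [E_apply, mul_comm]
  rw [hE] at hRe
  have hadd := hRe.add_const (Real.log (‖f x‖))
  refine hadd.congr_of_eventuallyEq ?_
  have hne : ∀ᶠ w in 𝓝 x, f w ≠ 0 := hf.continuousAt.eventually_ne h0
  filter_upwards [hne] with w hw
  rw [Complex.log_re, norm_div, Real.log_div (by simpa using hw) (by simpa using h0)]
  ring

end DLog

section Du

variable {D : ℕ} {P : Polynomial ℂ}

lemma hasfderiv_u (hD : 2 ≤ D) (n : ℕ) {z : ℂ} (h0 : Q P n z ≠ 0) :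
    HasFDerivAt (fun w => (1 / (D:ℝ) ^ n) * Real.log (‖Q P n w‖))
      (E (phi P D n z)) z := by
  have hder : HasDerivAt (fun w => Q P n w) (dQ P n z) z := Polynomial.hasDerivAt _ _
  have h1 := hdlog hder h0
  have h2 := h1.const_mul (1 / (D:ℝ) ^ n)
  have hDne : ((D:ℝ)) ^ n ≠ 0 := by positivity
  have hDCne : ((D:ℂ)) ^ n ≠ 0 := by
    have : (D:ℂ) ≠ 0 := by simp only [ne_eq, Nat.cast_eq_zero]; omega
    exact pow_ne_zero _ this
  have hE : (1 / (D:ℝ) ^ n) • E (dQ P n z / Q P n z) = E (phi P D n z) := by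
    have hcast : ((1 / (D:ℝ) ^ n : ℝ) : ℂ) = 1 / (D:ℂ) ^ n := by push_cast; ring
    rw [← E_smul, hcast]
    congr 1
    unfold phi
    field_simp
  rwa [hE] at h2

end Du

section BigD

variable {D : ℕ} {P : Polynomial ℂ}

lemma hasFDerivAt_G (hD : 2 ≤ D) (hmonic : P.Monic) (hdeg : P.natDegree = D)
    {G : ℂ → ℝ}
    (hG : ∀ z : ℂ, Tendsto (fun n : ℕ =>
        (1 / (D : ℝ) ^ n) * max (Real.log (‖(fun w => P.eval w)^[n] z‖)) 0)
      atTop (𝓝 (G z)))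
    {x : ℂ} {N : ℕ} (hx : RR P D ≤ ‖Q P N x‖) :
    HasFDerivAt G (E (psi P D x)) x := by
  have hRpos := RR_pos (P := P) (D := D)
  have hDne : (D:ℂ) ≠ 0 := by simp only [ne_eq, Nat.cast_eq_zero]; omega
  have hx1 : RR P D * 2 ^ 1 ≤ ‖Q P (N + 1) x‖ := Qgrow hD hmonic hdeg hx 1
  set N' := N + 1 with hN'
  have hx' : RR P D < ‖Q P N' x‖ := by
    have : RR P D < RR P D * 2 ^ 1 := by nlinarith
    linarith
  set B := ‖phi P D N' x‖ + 1 with hB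
  set U : Set ℂ := {w | RR P D < ‖Q P N' w‖ ∧ ‖phi P D N' w‖ < B} with hU
  have hxU : x ∈ U := ⟨hx', by simp [hB]⟩
  have hBpos : (0:ℝ) < B := by
    have := norm_nonneg (phi P D N' x); simp only [hB]; linarith
  have hUopen : IsOpen U := by
    have hV : IsOpen {w : ℂ | RR P D < ‖Q P N' w‖} := by
      have hc : Continuous fun w : ℂ => ‖Q P N' w‖ := by
        exact (Piter P N').continuous.norm
      exact isOpen_lt continuous_const hc
    have hcont : ContinuousOn (fun w => phi P D N' w) {w : ℂ | RR P D < ‖Q P N' w‖} := by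
      simp only [phi]
      apply ContinuousOn.div
      · exact (Piter P N').derivative.continuous.continuousOn
      · exact (continuous_const.mul (Piter P N').continuous).continuousOn
      · intro w hw
        have hQpos : (0:ℝ) < ‖Q P N' w‖ := lt_trans hRpos hw
        exact mul_ne_zero (pow_ne_zero _ hDne) (norm_pos_iff.mp hQpos)
    have hUeq : U = {w : ℂ | RR P D < ‖Q P N' w‖}
        ∩ (fun w => phi P D N' w) ⁻¹' (Metric.ball 0 B) := by
      ext w
      simp [hU, Set.mem_setOf_eq, mem_ball_zero_iff]
    rw [hUeq]
    exact hcont.isOpen_inter_preimage hV Metric.isOpen_ball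
  have conv : TendstoUniformlyOn (fun (m : ℕ) z => E (phi P D (N' + m) z))
      (fun z => E (psi P D z)) atTop U := by
    rw [Metric.tendstoUniformlyOn_iff]
    intro ε hε
    have hto : Tendsto (fun m : ℕ => B * (1/2) ^ m) atTop (𝓝 0) := by
      have h1 : Tendsto (fun m : ℕ => ((1:ℝ)/2) ^ m) atTop (𝓝 0) :=
        tendsto_pow_atTop_nhds_zero_of_lt_one (by norm_num) (by norm_num)
      simpa using h1.const_mul B
    have hev : ∀ᶠ m in atTop, B * (1/2) ^ m < ε := hto.eventually_lt_const hε
    filter_upwards [hev] with m hm z hz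
    have hzU : RR P D ≤ ‖Q P N' z‖ := le_of_lt hz.1
    have hd := dist_psi hD hmonic hdeg hzU m
    rw [dist_eq_norm]
    calc ‖E (psi P D z) - E (phi P D (N'+m) z)‖
        = ‖E (psi P D z - phi P D (N'+m) z)‖ := by rw [E_sub]
      _ ≤ ‖psi P D z - phi P D (N'+m) z‖ := E_norm_le _
      _ ≤ ‖phi P D N' z‖ * (1/2) ^ m := hd
      _ ≤ B * (1/2) ^ m := by
          have h2 : (0:ℝ) ≤ (1/2:ℝ) ^ m := by positivity
          nlinarith [hz.2]
      _ < ε := hm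
  have hf : ∀ m : ℕ, ∀ z : ℂ, z ∈ U → HasFDerivAt
      (fun w => (1 / (D:ℝ) ^ (N' + m)) * Real.log (‖Q P (N' + m) w‖))
      (E (phi P D (N' + m) z)) z := by
    intro m z hz
    apply hasfderiv_u hD
    have h1 := Qgrow hD hmonic hdeg (le_of_lt hz.1) m
    have h2 : (0:ℝ) < RR P D * 2 ^ m := by positivity
    exact norm_pos_iff.mp (lt_of_lt_of_le h2 h1)
  have hfg : ∀ z : ℂ, z ∈ U → Tendsto
      (fun m => (1 / (D:ℝ) ^ (N' + m)) * Real.log (‖Q P (N' + m) z‖))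
      atTop (𝓝 (G z)) := by
    intro z hz
    have h1 := (hG z).comp (tendsto_add_atTop_nat N')
    refine h1.congr fun m => ?_
    have hm := Qgrow hD hmonic hdeg (le_of_lt hz.1) m
    have h8 : (8:ℝ) ≤ RR P D := RR_big
    have hp : (1:ℝ) ≤ (2:ℝ) ^ m := one_le_pow₀ (by norm_num)
    have hge1 : (1:ℝ) ≤ ‖Q P (N' + m) z‖ := by nlinarith
    have hlog : 0 ≤ Real.log (‖Q P (N' + m) z‖) := by
      apply Real.log_nonneg
      exact hge1
    have hiter : (fun w => P.eval w)^[m + N'] z = Q P (N' + m) z := by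
      rw [Q_iterate]; congr 1; omega
    simp only [Function.comp_apply]
    rw [hiter, max_eq_left hlog, show m + N' = N' + m by omega]
  exact hasFDerivAt_of_tendstoUniformlyOn hUopen conv hf hfg hxU

end BigD

section FEq

variable {D : ℕ} {P : Polynomial ℂ}

lemma feq (hD : 2 ≤ D) {G : ℂ → ℝ}
    (hG : ∀ z : ℂ, Tendsto (fun n : ℕ =>
        (1 / (D : ℝ) ^ n) * max (Real.log (‖(fun w => P.eval w)^[n] z‖)) 0)
      atTop (𝓝 (G z))) (w : ℂ) :
    G (P.eval w) = (D:ℝ) * G w := by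
  have hDne : ((D:ℝ)) ≠ 0 := by positivity
  have h1 := hG (P.eval w)
  have h2 := (hG w).comp (tendsto_add_atTop_nat 1)
  have h3 := h2.const_mul (D:ℝ)
  refine tendsto_nhds_unique h1 ?_
  refine h3.congr fun n => ?_
  simp only [Function.comp_apply]
  rw [show (fun w => P.eval w)^[n + 1] w = (fun w => P.eval w)^[n] (P.eval w) from
    Function.iterate_succ_apply _ _ _]
  rw [show (D:ℝ) * ((1 / (D:ℝ) ^ (n+1)) * max (Real.log
    ‖(fun w => P.eval w)^[n] (P.eval w)‖) 0) = ((D:ℝ) * (1 / (D:ℝ) ^ (n+1))) * max _ 0 from by ring]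
  congr 1
  rw [pow_succ]
  field_simp

lemma Giter (hD : 2 ≤ D) {G : ℂ → ℝ}
    (hG : ∀ z : ℂ, Tendsto (fun n : ℕ =>
        (1 / (D : ℝ) ^ n) * max (Real.log (‖(fun w => P.eval w)^[n] z‖)) 0)
      atTop (𝓝 (G z))) (j : ℕ) (z : ℂ) :
    G (Q P j z) = (D:ℝ) ^ j * G z := by
  induction j with
  | zero => simp [Q_zero]
  | succ j ih =>
      rw [Q_succ', feq hD hG, ih, pow_succ]
      ring

lemma prop (hD : 2 ≤ D) (hmonic : P.Monic) (hdeg : P.natDegree = D) {z : ℂ} {N : ℕ}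
    (hesc : RR P D ≤ ‖Q P N z‖) (hz : psi P D z = 0)
    (hder : P.derivative.eval z ≠ 0) : psi P D (P.eval z) = 0 := by
  have h1 : Tendsto (fun n => phi P D n z) atTop (𝓝 0) := by
    have := tendsto_phi hD hmonic hdeg hesc
    rwa [hz] at this
  have h2 : Tendsto (fun n => phi P D (n + 1) z) atTop (𝓝 0) :=
    h1.comp (tendsto_add_atTop_nat 1)
  have h3 : Tendsto (fun n => (D:ℂ) / P.derivative.eval z * phi P D (n + 1) z) atTop (𝓝 0) := by
    have := h2.const_mul ((D:ℂ) / P.derivative.eval z)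
    simpa using this
  have hDne : (D:ℂ) ≠ 0 := by simp only [ne_eq, Nat.cast_eq_zero]; omega
  have key : ∀ n, phi P D n (P.eval z) = (D:ℂ) / P.derivative.eval z * phi P D (n + 1) z := by
    intro n
    by_cases hq : Q P n (P.eval z) = 0
    · simp [phi, hq, Q_succ, dQ_succ]
    · have htne : ((D:ℂ)) ^ n ≠ 0 := pow_ne_zero _ hDne
      simp only [phi, dQ_succ, Q_succ, pow_succ]
      field_simp
  exact ((h3.congr fun n => (key n).symm)).limUnder_eq

end FEq

section Main

variable {D : ℕ} {P : Polynomial ℂ}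

lemma natDegree_Piter (hdeg : P.natDegree = D) (j : ℕ) : (Piter P j).natDegree = D ^ j := by
  induction j with
  | zero => simp [Piter]
  | succ j ih =>
      show ((Piter P j).comp P).natDegree = _
      rw [Polynomial.natDegree_comp, ih, hdeg, pow_succ]

lemma Pder_ne (hD : 2 ≤ D) (hmonic : P.Monic) (hdeg : P.natDegree = D) :
    P.derivative ≠ 0 := by
  intro h
  have h1 : P.derivative.coeff (D - 1) = 0 := by rw [h]; simp
  rw [Polynomial.coeff_derivative, show D - 1 + 1 = D by omega] at h1
  have h2 : P.coeff D = 1 := by rw [← hdeg]; exact hmonic.coeff_natDegree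
  rw [h2, one_mul] at h1
  have : ((D - 1 : ℕ) : ℂ) + 1 ≠ 0 := by
    have : (((D - 1 : ℕ) : ℂ) + 1) = ((D : ℕ) : ℂ) := by
      push_cast [show ((D - 1 : ℕ) : ℂ) = ((D:ℂ) - 1) from by push_cast [Nat.cast_sub (by omega : 1 ≤ D)]; ring]
      ring
    rw [this]
    simp only [ne_eq, Nat.cast_eq_zero]; omega
  exact this h1

end Main

end

end Sing

open Filter Topology Sing

/-- For every `s > 0` there are only finitely many singularities of `G`
(critical points of `G` outside the filled Julia set) at potential greater than `s`. -/
theorem finitely_many_singularities_above_potential (D : ℕ) (hD : 2 ≤ D)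
    (P : Polynomial ℂ) (hmonic : P.Monic) (hdeg : P.natDegree = D) (G : ℂ → ℝ)
    (hG : ∀ z : ℂ, Tendsto (fun n : ℕ =>
        (1 / (D : ℝ) ^ n) *
          max (Real.log (‖(fun w => P.eval w)^[n] z‖)) 0)
      atTop (𝓝 (G z))) :
    ∀ s : ℝ, 0 < s →
      {z : ℂ |
        ¬ Bornology.IsBounded (Set.range fun n : ℕ => (fun w => P.eval w)^[n] z) ∧
        fderiv ℝ G z = 0 ∧ s < G z}.Finite := by
  intro s hs
  classical
  have hDR1 : (1:ℝ) < (D:ℝ) := by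
    have : (2:ℝ) ≤ (D:ℝ) := by exact_mod_cast hD
    linarith
  have hPder0 : P.derivative ≠ 0 := Pder_ne hD hmonic hdeg
  have hcritfin : {c : ℂ | P.derivative.IsRoot c}.Finite :=
    Polynomial.finite_setOf_isRoot hPder0
  obtain ⟨M, hM⟩ : ∃ M : ℝ, ∀ c ∈ {c : ℂ | P.derivative.IsRoot c}, G c ≤ M := by
    obtain ⟨M, hM⟩ := (hcritfin.image G).bddAbove
    exact ⟨M, fun c hc => hM (Set.mem_image_of_mem G hc)⟩
  obtain ⟨K, hK⟩ : ∃ K : ℕ, M < (D:ℝ) ^ K * s := by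
    obtain ⟨K, hK⟩ := pow_unbounded_of_one_lt (M / s) hDR1
    exact ⟨K, by rwa [div_lt_iff₀ hs] at hK⟩
  have Hsub : {z : ℂ |
        ¬ Bornology.IsBounded (Set.range fun n : ℕ => (fun w => P.eval w)^[n] z) ∧
        fderiv ℝ G z = 0 ∧ s < G z}
      ⊆ ⋃ j ∈ Finset.range K, {z : ℂ | (P.derivative.comp (Piter P j)).IsRoot z} := by
    rintro z ⟨hub, hfd, hsz⟩
    -- escape
    obtain ⟨N, hN⟩ : ∃ N, RR P D ≤ ‖Q P N z‖ := by
      by_contra h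
      push_neg at h
      apply hub
      refine Bornology.IsBounded.subset (Metric.isBounded_closedBall
        (x := (0:ℂ)) (r := RR P D)) ?_
      rintro y ⟨n, rfl⟩
      simp only [mem_closedBall_zero_iff]
      rw [← Q_iterate]
      exact (h n).le
    have hpsi0 : psi P D z = 0 := by
      have hF := hasFDerivAt_G hD hmonic hdeg hG hN
      have h1 := hF.fderiv
      rw [hfd] at h1
      exact E_inj h1.symm
    have hesck : ∀ k, RR P D ≤ ‖Q P N (Q P k z)‖ := by
      intro k
      rw [Q_add]
      have h1 := Qgrow hD hmonic hdeg hN k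
      have hp : (1:ℝ) ≤ (2:ℝ) ^ k := one_le_pow₀ (by norm_num)
      have := RR_pos (P := P) (D := D)
      rw [show N + k = N + k from rfl]
      nlinarith
    have claim : ∀ k, (∃ j, j < k ∧ P.derivative.eval (Q P j z) = 0)
        ∨ psi P D (Q P k z) = 0 := by
      intro k
      induction k with
      | zero =>
          right
          rwa [Q_zero]
      | succ k ih =>
          rcases ih with ⟨j, hj, hjr⟩ | hk
          · exact Or.inl ⟨j, by omega, hjr⟩
          · by_cases hcrit : P.derivative.eval (Q P k z) = 0
            · exact Or.inl ⟨k, by omega, hcrit⟩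
            · right
              rw [Q_succ']
              exact prop hD hmonic hdeg (hesck k) hk hcrit
    have hj : ∃ j, j < N ∧ P.derivative.eval (Q P j z) = 0 := by
      rcases claim N with h | h
      · exact h
      · exfalso
        have hlow := psi_lower hD hmonic hdeg hN
        rw [h, norm_zero] at hlow
        have hpos : (0:ℝ) < ‖Q P N z‖ := lt_of_lt_of_le (RR_pos (P := P) (D := D)) hN
        have : (0:ℝ) < 1 / (2 * ‖Q P N z‖) := by positivity
        linarith
    obtain ⟨j, hjN, hjcrit⟩ := hj
    have hGle : G (Q P j z) ≤ M := hM _ hjcrit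
    have hGeq : G (Q P j z) = (D:ℝ) ^ j * G z := Giter hD hG j z
    have hjK : j < K := by
      have hp : (0:ℝ) < (D:ℝ) ^ j := by positivity
      have h1 : (D:ℝ) ^ j * s < (D:ℝ) ^ j * G z := by nlinarith
      rw [hGeq] at hGle
      have h2 : (D:ℝ) ^ j * s < (D:ℝ) ^ K * s := by linarith
      have h3 : (D:ℝ) ^ j < (D:ℝ) ^ K := lt_of_mul_lt_mul_right h2 hs.le
      exact (pow_lt_pow_iff_right₀ hDR1).mp h3
    simp only [Set.mem_iUnion, Set.mem_setOf_eq]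
    refine ⟨j, Finset.mem_range.mpr hjK, ?_⟩
    show (P.derivative.comp (Piter P j)).eval z = 0
    rw [Polynomial.eval_comp]
    exact hjcrit
  refine Set.Finite.subset ?_ Hsub
  refine Set.Finite.biUnion (Finset.range K).finite_toSet fun j _ => ?_
  apply Polynomial.finite_setOf_isRoot
  intro hzero
  rw [Polynomial.comp_eq_zero_iff] at hzero
  rcases hzero with h | ⟨-, hC⟩
  · exact hPder0 h
  · have h1 : (Piter P j).natDegree = D ^ j := natDegree_Piter hdeg j
    rw [hC] at h1
    simp only [Polynomial.natDegree_C] at h1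
    have hp : 0 < D ^ j := pow_pos (by omega) j
    omega
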